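/- Let B_n = (Z/2Z) ≀ S_n be the group of signed permutations. The proportion of elements of B_n whose odd-length cycles are all negative and whose even-length cycles are all positive is the coefficient of u^n in (1-u)^{-1/2}, and hence is at most 1/√(πn). -/

import Mathlib

open scoped Classical

/-- The cycle of `π` containing `a`, as a finset. -/
noncomputable def cyc {n : ℕ} (π : Equiv.Perm (Fin n)) (a : Fin n) : Finset (Fin n) :=
  Finset.univ.filter (π.SameCycle a)

/-- The number of signed permutations (modeled as pairs `(ε, π)` with
`ε : Fin n → ZMod 2` the sign vector) all of whose odd-length cycles are
negative (sign sum 1) and all of whose even-length cycles are positive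
(sign sum 0). -/
noncomputable def signedCount (n : ℕ) : ℕ :=
  (Finset.univ.filter fun p : (Fin n → ZMod 2) × Equiv.Perm (Fin n) =>
    ∀ a : Fin n,
      (Odd (cyc p.2 a).card → ∑ b ∈ cyc p.2 a, p.1 b = 1) ∧
      (Even (cyc p.2 a).card → ∑ b ∈ cyc p.2 a, p.1 b = 0)).card

open Equiv Equiv.Perm Finset

namespace SignedAux

variable {n : ℕ}

lemma z2add (x : ZMod 2) : x + x = 0 := by
  have h : (2 : ZMod 2) = 0 := rfl
  calc x + x = 2 * x := (two_mul x).symm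
  _ = 0 := by rw [h, zero_mul]

lemma sc_of_pow {α : Type*} {f : Perm α} {x y : α} {i : ℕ} (h : (f ^ i) x = y) :
    f.SameCycle x y := ⟨(i : ℤ), by rw [zpow_natCast]; exact h⟩

lemma sc_apply {α : Type*} (f : Perm α) (x : α) : f.SameCycle x (f x) :=
  ⟨1, by rw [zpow_one]⟩

lemma mem_cyc {π : Perm (Fin n)} {a b : Fin n} : b ∈ cyc π a ↔ π.SameCycle a b := by
  simp [cyc]

lemma cyc_eq_of_sameCycle {π : Perm (Fin n)} {a b : Fin n} (h : π.SameCycle a b) :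
    cyc π a = cyc π b := by
  ext c
  simp only [mem_cyc]
  exact ⟨fun h2 => h.symm.trans h2, fun h2 => h.trans h2⟩

noncomputable def validSigns (π : Perm (Fin n)) : Finset (Fin n → ZMod 2) :=
  Finset.univ.filter fun ε => ∀ a, ∑ b ∈ cyc π a, ε b = ((cyc π a).card : ZMod 2)

lemma mem_validSigns {π : Perm (Fin n)} {ε : Fin n → ZMod 2} :
    ε ∈ validSigns π ↔ ∀ a, ∑ b ∈ cyc π a, ε b = ((cyc π a).card : ZMod 2) := by
  simp [validSigns]

lemma parity_iff {m : ℕ} {s : ZMod 2} :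
    ((Odd m → s = 1) ∧ (Even m → s = 0)) ↔ s = (m : ZMod 2) := by
  have h2 : (2 : ZMod 2) = 0 := rfl
  rcases Nat.even_or_odd m with h | h
  · obtain ⟨k, rfl⟩ := h
    have hodd : ¬ Odd (k + k) := by rw [Nat.odd_iff]; omega
    have hc : ((k + k : ℕ) : ZMod 2) = 0 := by push_cast; rw [← two_mul, h2, zero_mul]
    rw [hc]
    exact ⟨fun h => h.2 ⟨k, rfl⟩, fun h => ⟨fun ho => absurd ho hodd, fun _ => h⟩⟩
  · obtain ⟨k, rfl⟩ := h
    have heven : ¬ Even (2 * k + 1) := by rw [Nat.even_iff]; omega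
    have hc : ((2 * k + 1 : ℕ) : ZMod 2) = 1 := by push_cast; rw [h2, zero_mul, zero_add]
    rw [hc]
    exact ⟨fun h => h.1 ⟨k, rfl⟩, fun h => ⟨fun _ => h, fun he => absurd he heven⟩⟩

lemma signedCount_eq_sum (n : ℕ) :
    signedCount n = ∑ π : Perm (Fin n), (validSigns π).card := by
  have hcond : ∀ p : (Fin n → ZMod 2) × Equiv.Perm (Fin n),
      (∀ a : Fin n,
        (Odd (cyc p.2 a).card → ∑ b ∈ cyc p.2 a, p.1 b = 1) ∧
        (Even (cyc p.2 a).card → ∑ b ∈ cyc p.2 a, p.1 b = 0)) ↔ p.1 ∈ validSigns p.2 := by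
    intro p
    rw [mem_validSigns]
    exact forall_congr' fun a => parity_iff
  rw [signedCount]
  rw [Finset.card_eq_sum_card_fiberwise (f := Prod.snd)
    (t := (Finset.univ : Finset (Perm (Fin n)))) (fun x _ => Finset.mem_univ _)]
  refine Finset.sum_congr rfl fun π _ => ?_
  refine Finset.card_bij (fun p _ => p.1) ?_ ?_ ?_
  · intro p hp
    simp only [Finset.mem_filter, Finset.mem_univ, true_and] at hp
    have h1 := (hcond p).mp hp.1
    rw [hp.2] at h1
    exact h1
  · intro p hp p' hp'
    simp only [Finset.mem_filter, Finset.mem_univ, true_and] at hp hp'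
    intro h
    exact Prod.ext h (hp.2.trans hp'.2.symm)
  · intro ε hε
    exact ⟨(ε, π), Finset.mem_filter.mpr ⟨Finset.mem_filter.mpr
      ⟨Finset.mem_univ _, (hcond (ε, π)).mpr hε⟩, rfl⟩, rfl⟩

section Pi0

lemma pi0_apply_succ (σ : Perm (Fin n)) (x : Fin n) :
    decomposeFin.symm (0, σ) x.succ = (σ x).succ := by
  simp [Equiv.swap_self]

lemma pi0_pow (σ : Perm (Fin n)) (i : ℕ) (x : Fin n) :
    ((decomposeFin.symm (0, σ) : Perm (Fin (n+1))) ^ i) x.succ = ((σ ^ i) x).succ := by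
  induction i generalizing x with
  | zero => simp
  | succ i ih =>
    rw [pow_succ, pow_succ, Perm.mul_apply, Perm.mul_apply]
    have h : decomposeFin.symm (0, σ) x.succ = (σ x).succ := by simp [Equiv.swap_self]
    rw [h, ih]

lemma sameCycle_pi0_succ_succ {σ : Perm (Fin n)} {x y : Fin n} :
    (decomposeFin.symm (0, σ) : Perm (Fin (n+1))).SameCycle x.succ y.succ ↔ σ.SameCycle x y := by
  constructor
  · intro h
    obtain ⟨i, -, hi⟩ := h.exists_pow_eq'
    rw [pi0_pow] at hi
    exact sc_of_pow (Fin.succ_injective _ hi)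
  · intro h
    obtain ⟨i, -, hi⟩ := h.exists_pow_eq'
    exact sc_of_pow (by rw [pi0_pow, hi])

lemma sameCycle_pi0_zero {σ : Perm (Fin n)} {b : Fin (n+1)} :
    (decomposeFin.symm (0, σ) : Perm (Fin (n+1))).SameCycle 0 b ↔ b = 0 := by
  constructor
  · intro h
    exact (h.eq_of_left (by simp [Function.IsFixedPt])).symm
  · rintro rfl; exact Equiv.Perm.SameCycle.refl _ _

lemma cyc_pi0_zero (σ : Perm (Fin n)) : cyc (decomposeFin.symm (0, σ)) 0 = {0} := by
  ext b
  simp [cyc, sameCycle_pi0_zero]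

lemma cyc_pi0_succ (σ : Perm (Fin n)) (x : Fin n) :
    cyc (decomposeFin.symm (0, σ)) x.succ = (cyc σ x).image Fin.succ := by
  ext b
  induction b using Fin.cases with
  | zero =>
    simp only [mem_cyc, Finset.mem_image]
    constructor
    · intro h
      have := (h.symm.eq_of_left (by simp [Function.IsFixedPt]))
      exact absurd this.symm (Fin.succ_ne_zero x)
    · rintro ⟨y, -, hy⟩
      exact absurd hy (Fin.succ_ne_zero y)
  | succ y =>
    simp only [mem_cyc, Finset.mem_image, sameCycle_pi0_succ_succ]
    constructor
    · intro h; exact ⟨y, h, rfl⟩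
    · rintro ⟨z, hz, hzy⟩
      rw [Fin.succ_inj] at hzy
      subst hzy
      exact hz

end Pi0

section Piq

lemma piq_apply_succ (σ : Perm (Fin n)) (q x : Fin n) :
    decomposeFin.symm (q.succ, σ) x.succ = if σ x = q then 0 else (σ x).succ := by
  rw [Equiv.Perm.decomposeFin_symm_apply_succ]
  rcases eq_or_ne (σ x) q with h | h
  · rw [if_pos h, h, Equiv.swap_apply_right]
  · rw [if_neg h, Equiv.swap_apply_of_ne_of_ne (Fin.succ_ne_zero _) (by
      simpa [Fin.succ_inj] using h)]

/-- The target relation describing cycles of `decomposeFin.symm (q.succ, σ)`. -/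
def Pq (σ : Perm (Fin n)) (q : Fin n) (a b : Fin (n+1)) : Prop :=
  Fin.cases (Fin.cases True (fun y => σ.SameCycle q y) b)
    (fun x => Fin.cases (σ.SameCycle x q) (fun y => σ.SameCycle x y) b) a

@[simp] lemma Pq_zero_zero (σ : Perm (Fin n)) (q : Fin n) : Pq σ q 0 0 ↔ True := by
  simp [Pq]

@[simp] lemma Pq_zero_succ (σ : Perm (Fin n)) (q y : Fin n) :
    Pq σ q 0 y.succ ↔ σ.SameCycle q y := by simp [Pq]

@[simp] lemma Pq_succ_zero (σ : Perm (Fin n)) (q x : Fin n) :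
    Pq σ q x.succ 0 ↔ σ.SameCycle x q := by simp [Pq]

@[simp] lemma Pq_succ_succ (σ : Perm (Fin n)) (q x y : Fin n) :
    Pq σ q x.succ y.succ ↔ σ.SameCycle x y := by simp [Pq]

lemma Pq_refl (σ : Perm (Fin n)) (q : Fin n) (a : Fin (n+1)) : Pq σ q a a := by
  induction a using Fin.cases with
  | zero => simp
  | succ x => simp [Equiv.Perm.SameCycle.refl]

lemma Pq_step (σ : Perm (Fin n)) (q : Fin n) (a c : Fin (n+1)) (h : Pq σ q a c) :
    Pq σ q a (decomposeFin.symm (q.succ, σ) c) := by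
  induction c using Fin.cases with
  | zero =>
    rw [Equiv.Perm.decomposeFin_symm_apply_zero]
    induction a using Fin.cases with
    | zero => simp [Equiv.Perm.SameCycle.refl]
    | succ x => simpa using (by simpa using h : σ.SameCycle x q)
  | succ y =>
    rw [piq_apply_succ]
    rcases eq_or_ne (σ y) q with hq | hq
    · rw [if_pos hq]
      induction a using Fin.cases with
      | zero => simp
      | succ x =>
        have hxy : σ.SameCycle x y := by simpa using h
        have hyq : σ.SameCycle y q := hq ▸ sc_apply σ y
        simpa using hxy.trans hyq
    · rw [if_neg hq]
      induction a using Fin.cases with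
      | zero =>
        have hqy : σ.SameCycle q y := by simpa using h
        simpa using hqy.trans (sc_apply σ y)
      | succ x =>
        have hxy : σ.SameCycle x y := by simpa using h
        simpa using hxy.trans (sc_apply σ y)

lemma pq_of_sameCycle {σ : Perm (Fin n)} {q : Fin n} {a b : Fin (n+1)}
    (h : (decomposeFin.symm (q.succ, σ) : Perm (Fin (n+1))).SameCycle a b) : Pq σ q a b := by
  obtain ⟨i, -, hi⟩ := h.exists_pow_eq'
  subst hi
  clear h
  induction i with
  | zero => simpa using Pq_refl σ q a
  | succ i ih =>
    rw [pow_succ', Perm.mul_apply]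
    exact Pq_step _ _ _ _ ih

lemma sameCycle_piq_succ_succ_of {σ : Perm (Fin n)} {q x y : Fin n} (h : σ.SameCycle x y) :
    (decomposeFin.symm (q.succ, σ) : Perm (Fin (n+1))).SameCycle x.succ y.succ := by
  obtain ⟨i, -, hi⟩ := h.exists_pow_eq'
  subst hi
  clear h
  induction i generalizing x with
  | zero => simpa using Equiv.Perm.SameCycle.refl _ _
  | succ i ih =>
    have step : (decomposeFin.symm (q.succ, σ) : Perm (Fin (n+1))).SameCycle x.succ (σ x).succ := by
      rcases eq_or_ne (σ x) q with hq | hq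
      · have e1 : decomposeFin.symm (q.succ, σ) x.succ = 0 := by
          rw [piq_apply_succ, if_pos hq]
        have e2 : decomposeFin.symm (q.succ, σ) (0 : Fin (n+1)) = (σ x).succ := by
          rw [Equiv.Perm.decomposeFin_symm_apply_zero, hq]
        exact (sc_of_pow (i := 1) (by rw [pow_one, e1])).trans
          (sc_of_pow (i := 1) (by rw [pow_one, e2]))
      · have e : decomposeFin.symm (q.succ, σ) x.succ = (σ x).succ := by
          rw [piq_apply_succ, if_neg hq]
        exact sc_of_pow (i := 1) (by rw [pow_one, e])
    have : ((σ ^ (i+1)) x) = (σ ^ i) (σ x) := by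
      rw [pow_succ, Perm.mul_apply]
    rw [this]
    exact step.trans ih

lemma sameCycle_piq_zero_succ_of {σ : Perm (Fin n)} {q y : Fin n} (h : σ.SameCycle q y) :
    (decomposeFin.symm (q.succ, σ) : Perm (Fin (n+1))).SameCycle 0 y.succ := by
  have h1 : (decomposeFin.symm (q.succ, σ) : Perm (Fin (n+1))).SameCycle 0 q.succ :=
    sc_of_pow (i := 1) (by rw [pow_one, Equiv.Perm.decomposeFin_symm_apply_zero])
  exact h1.trans (sameCycle_piq_succ_succ_of h)

lemma cyc_piq_zero (σ : Perm (Fin n)) (q : Fin n) :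
    cyc (decomposeFin.symm (q.succ, σ)) 0 = insert 0 ((cyc σ q).image Fin.succ) := by
  ext b
  induction b using Fin.cases with
  | zero => simp [mem_cyc, Equiv.Perm.SameCycle.refl]
  | succ y =>
    simp only [mem_cyc, Finset.mem_insert, Finset.mem_image]
    constructor
    · intro h
      have := pq_of_sameCycle h
      rw [Pq_zero_succ] at this
      exact Or.inr ⟨y, this, rfl⟩
    · rintro (h | ⟨z, hz, hzy⟩)
      · exact absurd h (Fin.succ_ne_zero y)
      · rw [Fin.succ_inj] at hzy
        subst hzy
        exact sameCycle_piq_zero_succ_of hz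

lemma cyc_piq_succ_of_same (σ : Perm (Fin n)) (q x : Fin n) (hx : σ.SameCycle x q) :
    cyc (decomposeFin.symm (q.succ, σ)) x.succ = insert 0 ((cyc σ x).image Fin.succ) := by
  ext b
  induction b using Fin.cases with
  | zero =>
    simp only [mem_cyc, Finset.mem_insert, Finset.mem_image]
    constructor
    · intro _; exact Or.inl (by trivial)
    · intro _
      exact ((sameCycle_piq_zero_succ_of hx.symm).symm : _)
  | succ y =>
    simp only [mem_cyc, Finset.mem_insert, Finset.mem_image]
    constructor
    · intro h
      have := pq_of_sameCycle h
      rw [Pq_succ_succ] at this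
      exact Or.inr ⟨y, this, rfl⟩
    · rintro (h | ⟨z, hz, hzy⟩)
      · exact absurd h (Fin.succ_ne_zero y)
      · rw [Fin.succ_inj] at hzy
        subst hzy
        exact sameCycle_piq_succ_succ_of hz

lemma cyc_piq_succ_of_not (σ : Perm (Fin n)) (q x : Fin n) (hx : ¬ σ.SameCycle x q) :
    cyc (decomposeFin.symm (q.succ, σ)) x.succ = (cyc σ x).image Fin.succ := by
  ext b
  induction b using Fin.cases with
  | zero =>
    simp only [mem_cyc, Finset.mem_image]
    constructor
    · intro h
      have := pq_of_sameCycle h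
      rw [Pq_succ_zero] at this
      exact absurd this hx
    · rintro ⟨z, hz, hzy⟩
      exact absurd hzy (Fin.succ_ne_zero z)
  | succ y =>
    simp only [mem_cyc, Finset.mem_image]
    constructor
    · intro h
      have := pq_of_sameCycle h
      rw [Pq_succ_succ] at this
      exact ⟨y, this, rfl⟩
    · rintro ⟨z, hz, hzy⟩
      rw [Fin.succ_inj] at hzy
      subst hzy
      exact sameCycle_piq_succ_succ_of hz

end Piq

lemma sum_image_succ (ε : Fin (n+1) → ZMod 2) (s : Finset (Fin n)) :
    ∑ b ∈ s.image Fin.succ, ε b = ∑ b ∈ s, ε b.succ :=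
  Finset.sum_image (fun _ _ _ _ h => Fin.succ_injective n h)

lemma card_image_succ (s : Finset (Fin n)) : (s.image Fin.succ).card = s.card :=
  Finset.card_image_of_injective s (Fin.succ_injective n)

lemma zero_not_mem_image_succ (s : Finset (Fin n)) : (0 : Fin (n+1)) ∉ s.image Fin.succ := by
  simp only [Finset.mem_image, not_exists]
  intro y
  rintro ⟨-, hy⟩
  exact absurd hy (Fin.succ_ne_zero y)

lemma valid_pi0_iff (σ : Perm (Fin n)) (ε : Fin (n+1) → ZMod 2) :
    ε ∈ validSigns (decomposeFin.symm (0, σ)) ↔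
      ε 0 = 1 ∧ (fun y => ε y.succ) ∈ validSigns σ := by
  rw [mem_validSigns, mem_validSigns]
  constructor
  · intro h
    constructor
    · have := h 0
      rw [cyc_pi0_zero] at this
      simpa using this
    · intro x
      have := h x.succ
      rw [cyc_pi0_succ, sum_image_succ, card_image_succ] at this
      exact this
  · rintro ⟨h0, h⟩ a
    induction a using Fin.cases with
    | zero => rw [cyc_pi0_zero]; simpa using h0
    | succ x =>
      rw [cyc_pi0_succ, sum_image_succ, card_image_succ]
      exact h x

lemma valid_piq_iff (σ : Perm (Fin n)) (q : Fin n) (ε : Fin (n+1) → ZMod 2) :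
    ε ∈ validSigns (decomposeFin.symm (q.succ, σ)) ↔
      (ε 0 + ∑ b ∈ cyc σ q, ε b.succ = ((cyc σ q).card : ZMod 2) + 1) ∧
      (∀ x, ¬ σ.SameCycle x q → ∑ b ∈ cyc σ x, ε b.succ = ((cyc σ x).card : ZMod 2)) := by
  rw [mem_validSigns]
  constructor
  · intro h
    constructor
    · have := h 0
      rw [cyc_piq_zero, Finset.sum_insert (zero_not_mem_image_succ _),
        Finset.card_insert_of_notMem (zero_not_mem_image_succ _),
        sum_image_succ, card_image_succ] at this
      rw [this]
      push_cast
      ring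
    · intro x hx
      have := h x.succ
      rw [cyc_piq_succ_of_not σ q x hx, sum_image_succ, card_image_succ] at this
      exact this
  · rintro ⟨h0, h⟩ a
    induction a using Fin.cases with
    | zero =>
      rw [cyc_piq_zero, Finset.sum_insert (zero_not_mem_image_succ _),
        Finset.card_insert_of_notMem (zero_not_mem_image_succ _),
        sum_image_succ, card_image_succ, h0]
      push_cast
      ring
    | succ x =>
      by_cases hx : σ.SameCycle x q
      · rw [cyc_piq_succ_of_same σ q x hx, Finset.sum_insert (zero_not_mem_image_succ _),
          Finset.card_insert_of_notMem (zero_not_mem_image_succ _),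
          sum_image_succ, card_image_succ, cyc_eq_of_sameCycle hx, h0]
        push_cast
        ring
      · rw [cyc_piq_succ_of_not σ q x hx, sum_image_succ, card_image_succ]
        exact h x hx

lemma card_valid_pi0 (σ : Perm (Fin n)) :
    (validSigns (decomposeFin.symm (0, σ))).card = (validSigns σ).card := by
  refine Finset.card_bij' (fun ε _ => fun y => ε y.succ)
    (fun δ _ => fun a => Fin.cases 1 δ a) ?_ ?_ ?_ ?_
  · intro ε hε
    exact ((valid_pi0_iff σ ε).mp hε).2
  · intro δ hδ
    rw [valid_pi0_iff]
    refine ⟨by simp, ?_⟩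
    simpa using hδ
  · intro ε hε
    funext a
    induction a using Fin.cases with
    | zero => simpa using (((valid_pi0_iff σ ε).mp hε).1).symm
    | succ x => simp
  · intro δ hδ
    funext y
    simp

lemma card_valid_piq (σ : Perm (Fin n)) (q : Fin n) :
    (validSigns (decomposeFin.symm (q.succ, σ))).card = 2 * (validSigns σ).card := by
  have hcard : ((Finset.univ : Finset (ZMod 2)) ×ˢ validSigns σ).card
      = 2 * (validSigns σ).card := by
    rw [Finset.card_product, Finset.card_univ]
    norm_num [ZMod.card]
  rw [← hcard]
  refine Finset.card_bij' (fun ε _ => (ε 0 + 1, fun y => ε y.succ + if y = q then ε 0 + 1 else 0))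
    (fun p _ => fun a => Fin.cases (1 + p.1) (fun y => p.2 y + if y = q then p.1 else 0) a)
    ?_ ?_ ?_ ?_
  · -- forward membership
    intro ε hε
    obtain ⟨h0, h⟩ := (valid_piq_iff σ q ε).mp hε
    rw [Finset.mem_product]
    refine ⟨Finset.mem_univ _, ?_⟩
    rw [mem_validSigns]
    intro x
    by_cases hx : σ.SameCycle x q
    · have hq : q ∈ cyc σ x := mem_cyc.mpr hx
      rw [Finset.sum_add_distrib, Finset.sum_ite_eq' (cyc σ x) q, if_pos hq,
        cyc_eq_of_sameCycle hx]
      linear_combination h0 + z2add (1 : ZMod 2)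
    · have hq : q ∉ cyc σ x := fun hc => hx (mem_cyc.mp hc)
      rw [Finset.sum_add_distrib, Finset.sum_ite_eq' (cyc σ x) q, if_neg hq, add_zero]
      exact h x hx
  · -- backward membership
    intro p hp
    rw [Finset.mem_product, mem_validSigns] at hp
    obtain ⟨-, hvalid⟩ := hp
    rw [valid_piq_iff]
    constructor
    · simp only [Fin.cases_zero, Fin.cases_succ]
      have hq : q ∈ cyc σ q := mem_cyc.mpr (Equiv.Perm.SameCycle.refl _ _)
      rw [Finset.sum_add_distrib, Finset.sum_ite_eq' (cyc σ q) q, if_pos hq, hvalid q]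
      linear_combination z2add p.1
    · intro x hx
      simp only [Fin.cases_succ]
      have hq : q ∉ cyc σ x := fun hc => hx (mem_cyc.mp hc)
      rw [Finset.sum_add_distrib, Finset.sum_ite_eq' (cyc σ x) q, if_neg hq, add_zero]
      exact hvalid x
  · -- left inverse
    intro ε hε
    funext a
    induction a using Fin.cases with
    | zero =>
      simp only [Fin.cases_zero]
      rw [← add_assoc, add_comm 1 (ε 0), add_assoc, z2add, add_zero]
    | succ y =>
      simp only [Fin.cases_succ]
      by_cases hy : y = q
      · simp only [if_pos hy]
        linear_combination z2add (ε 0 + 1)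
      · simp only [if_neg hy]
        rw [add_zero, add_zero]
  · -- right inverse
    intro p hp
    refine Prod.ext ?_ ?_
    · simp only [Fin.cases_zero]
      linear_combination z2add (1 : ZMod 2)
    · funext y
      simp only [Fin.cases_zero, Fin.cases_succ]
      by_cases hy : y = q
      · simp only [if_pos hy]
        linear_combination z2add p.1 + z2add (1 : ZMod 2)
      · simp only [if_neg hy]
        rw [add_zero, add_zero]


lemma signedCount_succ (n : ℕ) : signedCount (n+1) = (2*n+1) * signedCount n := by
  rw [signedCount_eq_sum, signedCount_eq_sum]
  rw [Finset.univ_perm_fin_succ, Finset.sum_map]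
  simp only [Equiv.coe_toEmbedding]
  rw [Fintype.sum_prod_type, Fin.sum_univ_succ]
  have h0 : ∀ σ : Perm (Fin n),
      (validSigns (decomposeFin.symm ((0 : Fin (n+1)), σ))).card = (validSigns σ).card :=
    card_valid_pi0
  have hq : ∀ (q : Fin n) (σ : Perm (Fin n)),
      (validSigns (decomposeFin.symm (q.succ, σ))).card = 2 * (validSigns σ).card :=
    fun q σ => card_valid_piq σ q
  calc (∑ σ : Perm (Fin n), (validSigns (decomposeFin.symm ((0 : Fin (n+1)), σ))).card) +
        ∑ q : Fin n, ∑ σ : Perm (Fin n), (validSigns (decomposeFin.symm (q.succ, σ))).card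
      = (∑ σ : Perm (Fin n), (validSigns σ).card) +
        ∑ _q : Fin n, ∑ σ : Perm (Fin n), 2 * (validSigns σ).card := by
        rw [Finset.sum_congr rfl fun σ _ => h0 σ]
        congr 1
        exact Finset.sum_congr rfl fun q _ => Finset.sum_congr rfl fun σ _ => hq q σ
    _ = (∑ σ : Perm (Fin n), (validSigns σ).card) +
        n * (2 * ∑ σ : Perm (Fin n), (validSigns σ).card) := by
        rw [Finset.sum_const, Finset.card_univ, Fintype.card_fin, smul_eq_mul, ← Finset.mul_sum]
    _ = (2*n+1) * ∑ σ : Perm (Fin n), (validSigns σ).card := by ring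

lemma signedCount_zero : signedCount 0 = 1 := by
  rw [signedCount]
  rw [Finset.filter_true_of_mem (fun p _ => fun a => a.elim0)]
  rw [Finset.card_univ]
  simp

lemma signedCount_eq_prod (n : ℕ) : signedCount n = ∏ k ∈ range n, (2*k+1) := by
  induction n with
  | zero => simpa using signedCount_zero
  | succ n ih => rw [signedCount_succ, ih, Finset.prod_range_succ, mul_comm]

lemma prod_odd_mul (n : ℕ) :
    (∏ k ∈ range n, (2*k+1)) * (2^n * Nat.factorial n) = Nat.factorial (2*n) := by
  induction n with
  | zero => simp
  | succ n ih =>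
    have hf : Nat.factorial (2*(n+1)) = (2*n+2)*((2*n+1)*Nat.factorial (2*n)) := by
      have h2 : 2*(n+1) = (2*n+1)+1 := by ring
      rw [h2, Nat.factorial_succ, Nat.factorial_succ]
    rw [Finset.prod_range_succ, hf, ← ih, Nat.factorial_succ, pow_succ]
    ring

end SignedAux

/-- The proportion of elements of `B_n` with all odd cycles negative and all even
cycles positive is the coefficient of `u^n` in `(1-u)^{-1/2}`, hence at most
`1/√(πn)`. -/
theorem stmt13 (n : ℕ) (hn : 0 < n) :
    (signedCount n : ℝ) / (2 ^ n * Nat.factorial n) =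
        (Nat.choose (2 * n) n : ℝ) / 4 ^ n ∧
      (signedCount n : ℝ) / (2 ^ n * Nat.factorial n) ≤
        1 / Real.sqrt (Real.pi * n) := by
  have hfac : (0 : ℝ) < (Nat.factorial n : ℝ) := by positivity
  have h2n : (0 : ℝ) < 2 ^ n * (Nat.factorial n : ℝ) := by positivity
  have h1 : (signedCount n : ℝ) * (2 ^ n * Nat.factorial n) = (Nat.factorial (2*n) : ℝ) := by
    rw [SignedAux.signedCount_eq_prod]
    exact_mod_cast congrArg (Nat.cast : ℕ → ℝ) (SignedAux.prod_odd_mul n)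
  have h2 : (Nat.choose (2*n) n : ℝ) * (Nat.factorial n * Nat.factorial n)
      = (Nat.factorial (2*n) : ℝ) := by
    have h3 := Nat.choose_mul_factorial_mul_factorial (show n ≤ 2*n by omega)
    rw [show 2*n - n = n by omega] at h3
    have h4' : Nat.choose (2*n) n * (Nat.factorial n * Nat.factorial n)
        = Nat.factorial (2*n) := by rw [← h3]; ring
    exact_mod_cast congrArg (Nat.cast : ℕ → ℝ) h4'
  have h4 : (4 : ℝ)^n = 2^n * 2^n := by rw [← mul_pow]; norm_num
  have hmain : (signedCount n : ℝ) / (2 ^ n * Nat.factorial n)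
      = (Nat.choose (2 * n) n : ℝ) / 4 ^ n := by
    rw [div_eq_div_iff h2n.ne' (by positivity : ((4:ℝ)^n) ≠ 0)]
    have hne : (Nat.factorial n : ℝ) * Nat.factorial n ≠ 0 := by positivity
    apply mul_right_cancel₀ hne
    rw [h4]
    linear_combination ((2:ℝ)^n * Nat.factorial n) * h1 - ((2:ℝ)^n * Nat.factorial n) * h2
  refine ⟨hmain, ?_⟩
  rw [hmain]
  -- now prove (choose (2n) n : ℝ)/4^n ≤ 1 / sqrt (π n)
  set r : ℝ := (Nat.choose (2 * n) n : ℝ) / 4 ^ n with hr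
  have hrpos : 0 ≤ r := by positivity
  have hx : (0 : ℝ) < (n : ℝ) := by exact_mod_cast hn
  have hπn : (0 : ℝ) < Real.pi * n := by positivity
  -- Wallis
  have hW := Real.Wallis.le_W n
  have hWf := Real.Wallis.W_eq_factorial_ratio n
  have hWpos := Real.Wallis.W_pos n
  have hfac2 : (0 : ℝ) < (Nat.factorial (2*n) : ℝ) := by positivity
  -- key : π * n ≤ 2^(4n) n!^4 / (2n)!^2
  have hkey : Real.pi * n ≤ (2:ℝ)^(4*n) * (Nat.factorial n : ℝ)^4 / (Nat.factorial (2*n) : ℝ)^2 := by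
    have hstep : Real.pi * n ≤ ((2*n+1 : ℝ)) * Real.Wallis.W n := by
      have h1' : Real.pi * n ≤ ((2*(n:ℝ)+1)) * (((2*(n:ℝ)+1))/((2*(n:ℝ)+2)) * (Real.pi/2)) := by
        have hdiff : ((2*(n:ℝ)+1)) * (((2*(n:ℝ)+1))/((2*(n:ℝ)+2)) * (Real.pi/2)) - Real.pi*n
            = Real.pi/(2*(2*(n:ℝ)+2)) := by
          field_simp
          ring
        have hdp : (0:ℝ) < Real.pi/(2*(2*(n:ℝ)+2)) :=
          div_pos Real.pi_pos (by positivity)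
        linarith [hdiff, hdp]
      exact h1'.trans (mul_le_mul_of_nonneg_left hW (by positivity))
    have heq : ((2*n+1:ℝ)) * Real.Wallis.W n
        = (2:ℝ)^(4*n) * (Nat.factorial n : ℝ)^4 / (Nat.factorial (2*n) : ℝ)^2 := by
      rw [hWf]
      field_simp
    rw [← heq]
    exact hstep
  have hr2 : r^2 * (Real.pi * n) ≤ 1 := by
    have h16 : ((4:ℝ)^n)^2 = (2:ℝ)^(4*n) := by
      rw [← pow_mul, show (4:ℝ) = 2^2 by norm_num, ← pow_mul]
      ring_nf
    have hrsq : r^2 = (Nat.factorial (2*n) : ℝ)^2 / ((Nat.factorial n : ℝ)^4 * (2:ℝ)^(4*n)) := by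
      rw [hr, div_pow, h16]
      rw [show ((Nat.choose (2*n) n : ℝ))^2 = ((Nat.factorial (2*n) : ℝ))^2
          / ((Nat.factorial n : ℝ))^4 by
        rw [eq_div_iff (by positivity)]
        nlinarith [h2]]
      field_simp
    rw [hrsq]
    rw [div_mul_eq_mul_div, div_le_one (by positivity)]
    calc (Nat.factorial (2*n) : ℝ)^2 * (Real.pi * n)
        ≤ (Nat.factorial (2*n) : ℝ)^2 *
          ((2:ℝ)^(4*n) * (Nat.factorial n : ℝ)^4 / (Nat.factorial (2*n) : ℝ)^2) := by
          exact mul_le_mul_of_nonneg_left hkey (by positivity)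
      _ = (Nat.factorial n : ℝ)^4 * (2:ℝ)^(4*n) := by field_simp
  have h1n : r^2 ≤ 1/(Real.pi*n) := (le_div_iff₀ hπn).mpr hr2
  calc r = Real.sqrt (r^2) := (Real.sqrt_sq hrpos).symm
    _ ≤ Real.sqrt (1/(Real.pi*n)) := Real.sqrt_le_sqrt h1n
    _ = 1 / Real.sqrt (Real.pi*n) := by rw [one_div, Real.sqrt_inv, one_div]
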